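/- Let R be a commutative ring, and let V be the free R-module spanned by isomorphism classes of finite rooted directed acyclic multigraphs with source root, equipped with the insertion operator G₁ ⊲ G₂ := Σ_{v ∈ V(G₁)} [G₁ ⊲_v G₂], where G₁ ⊲_v G₂ is obtained by identifying the root of G₂ with the vertex v of G₁. Then the bracket [x, y] := x ⊲ y − y ⊲ x makes V into a Lie algebra: it is bilinear, satisfies [x, x] = 0, and satisfies the Jacobi identity [x,[y,z]] + [z,[x,y]] + [y,[z,x]] = 0. -/

import Mathlib

open scoped Classical

noncomputable section

/-- A finite rooted directed multigraph: finite vertex and edge types together with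
source and target maps, and a marked root vertex. -/
structure RootedMultigraph : Type 1 where
  V : Type
  E : Type
  [fintV : Fintype V]
  [fintE : Fintype E]
  src : E → V
  tgt : E → V
  root : V

attribute [instance] RootedMultigraph.fintV RootedMultigraph.fintE

namespace RootedMultigraph

/-- A graph is acyclic if it contains no directed cycle. -/
def Acyclic (G : RootedMultigraph) : Prop :=
  ¬ ∃ (n : ℕ) (e : Fin (n + 1) → G.E), ∀ i, G.tgt (e i) = G.src (e (i + 1))

/-- The root vertex is a source: no edge has it as target. -/
def RootIsSource (G : RootedMultigraph) : Prop := ∀ e : G.E, G.tgt e ≠ G.root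

/-- A rooted directed acyclic multigraph with source root. -/
def Good (G : RootedMultigraph) : Prop := G.Acyclic ∧ G.RootIsSource

/-- `G₁ ⊲_v G₂`: the graph obtained from the disjoint union of `G₁` and `G₂` by
identifying the root of `G₂` with the vertex `v` of `G₁`, rooted at the root of `G₁`. -/
def glue (G₁ : RootedMultigraph) (v : G₁.V) (G₂ : RootedMultigraph) : RootedMultigraph where
  V := G₁.V ⊕ {w : G₂.V // w ≠ G₂.root}
  E := G₁.E ⊕ G₂.E
  src := Sum.elim (fun e => Sum.inl (G₁.src e))
    (fun e => if h : G₂.src e = G₂.root then Sum.inl v else Sum.inr ⟨G₂.src e, h⟩)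
  tgt := Sum.elim (fun e => Sum.inl (G₁.tgt e))
    (fun e => if h : G₂.tgt e = G₂.root then Sum.inl v else Sum.inr ⟨G₂.tgt e, h⟩)
  root := Sum.inl G₁.root

/-- Isomorphism of rooted multigraphs. -/
def Iso (G G' : RootedMultigraph) : Prop :=
  ∃ (eV : G.V ≃ G'.V) (eE : G.E ≃ G'.E),
    (∀ e, eV (G.src e) = G'.src (eE e)) ∧
    (∀ e, eV (G.tgt e) = G'.tgt (eE e)) ∧ eV G.root = G'.root

end RootedMultigraph

namespace RootedMultigraph

open Fin.NatCast in
theorem glue_good {G₁ G₂ : RootedMultigraph} (h₁ : G₁.Good) (h₂ : G₂.Good) (v : G₁.V) :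
    (G₁.glue v G₂).Good := by
  obtain ⟨a₁, r₁⟩ := h₁
  obtain ⟨a₂, r₂⟩ := h₂
  constructor
  · rintro ⟨n, e, he⟩
    -- does there exist an inr edge?
    by_cases hR : ∃ i, ∃ f : G₂.E, e i = (Sum.inr f : G₁.E ⊕ G₂.E)
    · obtain ⟨i₀, f₀, hf₀⟩ := hR
      have step : ∀ j (f : G₂.E), e j = Sum.inr f → ∃ g, e (j + 1) = Sum.inr g := by
        intro j f hf
        have h := he j
        rw [hf] at h
        simp only [glue, Sum.elim_inr] at h
        rw [dif_neg (r₂ f)] at h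
        rcases h' : e (j + 1) with g | g
        · rw [h'] at h; simp [glue] at h
        · exact ⟨g, rfl⟩
      have all : ∀ k : ℕ, ∃ f, e (i₀ + (k : Fin (n+1))) = Sum.inr f := by
        intro k
        induction k with
        | zero => simpa using ⟨f₀, hf₀⟩
        | succ k ih =>
          obtain ⟨f, hf⟩ := ih
          obtain ⟨g, hg⟩ := step _ f hf
          refine ⟨g, ?_⟩
          rw [← hg]
          congr 1
          push_cast
          rw [add_assoc]
      have all' : ∀ i, ∃ f, e i = Sum.inr f := by
        intro i
        obtain ⟨f, hf⟩ := all ((i - i₀ : Fin (n+1)) : ℕ)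
        refine ⟨f, ?_⟩
        rw [← hf]; congr 1
        simp
      choose f hf using all'
      refine a₂ ⟨n, f, fun i => ?_⟩
      have h := he i
      rw [hf i, hf (i+1)] at h
      simp only [glue, Sum.elim_inr] at h
      rw [dif_neg (r₂ (f i))] at h
      split_ifs at h with hs <;> simp_all
    · have all' : ∀ i, ∃ f, e i = Sum.inl f := by
        intro i
        rcases h' : e i with g | g
        · exact ⟨g, rfl⟩
        · exact absurd ⟨i, g, h'⟩ hR

      choose f hf using all'
      refine a₁ ⟨n, f, fun i => ?_⟩
      have h := he i
      rw [hf i, hf (i+1)] at h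
      simpa [glue] using h
  · rintro (e | e) h
    · exact r₁ e (by simpa [glue] using h)
    · simp only [glue, Sum.elim_inr] at h
      rw [dif_neg (r₂ e)] at h
      simp [glue] at h



theorem glue_iso_congr {G₁ G₁' G₂ G₂' : RootedMultigraph}
    (eV : G₁.V ≃ G₁'.V) (eE : G₁.E ≃ G₁'.E)
    (hs₁ : ∀ e, eV (G₁.src e) = G₁'.src (eE e))
    (ht₁ : ∀ e, eV (G₁.tgt e) = G₁'.tgt (eE e))
    (hr₁ : eV G₁.root = G₁'.root)
    (fV : G₂.V ≃ G₂'.V) (fE : G₂.E ≃ G₂'.E)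
    (hs₂ : ∀ e, fV (G₂.src e) = G₂'.src (fE e))
    (ht₂ : ∀ e, fV (G₂.tgt e) = G₂'.tgt (fE e))
    (hr₂ : fV G₂.root = G₂'.root) (v : G₁.V) :
    Iso (G₁.glue v G₂) (G₁'.glue (eV v) G₂') := by
  have hroot : ∀ w : G₂.V, w ≠ G₂.root ↔ fV w ≠ G₂'.root := by
    intro w
    constructor
    · intro h hc
      exact h (fV.injective (by rw [hc, hr₂]))
    · intro h hc
      exact h (by rw [hc, hr₂])
  refine ⟨Equiv.sumCongr eV (fV.subtypeEquiv fun w => hroot w),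
    Equiv.sumCongr eE fE, ?_, ?_, ?_⟩
  · rintro (e | e)
    · erw [Equiv.sumCongr_apply, Equiv.sumCongr_apply]
      simpa [glue] using hs₁ e
    · erw [Equiv.sumCongr_apply, Equiv.sumCongr_apply]
      simp only [glue, Equiv.sumCongr_apply, Sum.elim_inr]
      rcases eq_or_ne (G₂.src e) G₂.root with h | h
      · have h' : G₂'.src (fE e) = G₂'.root := by rw [← hs₂, h, hr₂]
        simp [h, h']
      · have h' : G₂'.src (fE e) ≠ G₂'.root := by rw [← hs₂]; exact (hroot _).1 h
        simp [h, h', Equiv.subtypeEquiv, hs₂ e]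
  · rintro (e | e)
    · erw [Equiv.sumCongr_apply, Equiv.sumCongr_apply]
      simpa [glue] using ht₁ e
    · erw [Equiv.sumCongr_apply, Equiv.sumCongr_apply]
      simp only [glue, Equiv.sumCongr_apply, Sum.elim_inr]
      rcases eq_or_ne (G₂.tgt e) G₂.root with h | h
      · have h' : G₂'.tgt (fE e) = G₂'.root := by rw [← ht₂, h, hr₂]
        simp [h, h']
      · have h' : G₂'.tgt (fE e) ≠ G₂'.root := by rw [← ht₂]; exact (hroot _).1 h
        simp [h, h', Equiv.subtypeEquiv, ht₂ e]
  · erw [Equiv.sumCongr_apply]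
    simpa [glue] using hr₁

-- associativity-type iso
theorem iso_glue_assoc (G₁ G₂ G₃ : RootedMultigraph) (v : G₁.V) (w : G₂.V) :
    Iso ((G₁.glue v G₂).glue
          (if h : w = G₂.root then Sum.inl v else Sum.inr ⟨w, h⟩) G₃)
        (G₁.glue v (G₂.glue w G₃)) := by
  refine ⟨⟨fun x => match x with
      | .inl (.inl u) => .inl u
      | .inl (.inr w') => .inr ⟨.inl w'.1, fun hc => w'.2 (Sum.inl.inj hc)⟩
      | .inr z => .inr ⟨.inr z, fun hc => Sum.inr_ne_inl hc⟩,
    fun x => match x with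
      | .inl u => .inl (.inl u)
      | .inr ⟨.inl w', h⟩ => .inl (.inr ⟨w', fun hc => h (congrArg Sum.inl hc)⟩)
      | .inr ⟨.inr z, _⟩ => .inr z,
    by rintro ((u | w') | z) <;> rfl,
    by rintro (u | ⟨w' | z, h⟩) <;> rfl⟩,
    (Equiv.sumAssoc G₁.E G₂.E G₃.E), ?_, ?_, ?_⟩
  · rintro ((e | e) | e) <;>
      erw [Equiv.coe_fn_mk, Equiv.coe_fn_mk] <;>
      simp only [glue, Equiv.coe_fn_mk, Sum.elim_inl, Sum.elim_inr,
        Equiv.sumAssoc_apply_inl_inl, Equiv.sumAssoc_apply_inl_inr,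
        Equiv.sumAssoc_apply_inr] <;>
      split_ifs <;> simp_all
  · rintro ((e | e) | e) <;>
      erw [Equiv.coe_fn_mk, Equiv.coe_fn_mk] <;>
      simp only [glue, Equiv.coe_fn_mk, Sum.elim_inl, Sum.elim_inr,
        Equiv.sumAssoc_apply_inl_inl, Equiv.sumAssoc_apply_inl_inr,
        Equiv.sumAssoc_apply_inr] <;>
      split_ifs <;> simp_all
  · rfl

-- swap iso
theorem iso_glue_swap (G₁ G₂ G₃ : RootedMultigraph) (v u : G₁.V) :
    Iso ((G₁.glue v G₂).glue (Sum.inl u) G₃) ((G₁.glue u G₃).glue (Sum.inl v) G₂) := by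
  refine ⟨⟨fun x => match x with
      | .inl (.inl a) => .inl (.inl a)
      | .inl (.inr w') => .inr w'
      | .inr z => .inl (.inr z),
    fun x => match x with
      | .inl (.inl a) => .inl (.inl a)
      | .inl (.inr z) => .inr z
      | .inr w' => .inl (.inr w'),
    by rintro ((a | w') | z) <;> rfl,
    by rintro ((a | z) | w') <;> rfl⟩,
    ⟨fun x => match x with
      | .inl (.inl a) => .inl (.inl a)
      | .inl (.inr e₂) => .inr e₂
      | .inr e₃ => .inl (.inr e₃),
    fun x => match x with
      | .inl (.inl a) => .inl (.inl a)
      | .inl (.inr e₃) => .inr e₃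
      | .inr e₂ => .inl (.inr e₂),
    by rintro ((a | e) | e) <;> rfl,
    by rintro ((a | e) | e) <;> rfl⟩, ?_, ?_, ?_⟩
  · rintro ((e | e) | e) <;>
      erw [Equiv.coe_fn_mk, Equiv.coe_fn_mk] <;>
      simp only [glue, Equiv.coe_fn_mk, Sum.elim_inl, Sum.elim_inr] <;>
      split_ifs <;> simp_all
  · rintro ((e | e) | e) <;>
      erw [Equiv.coe_fn_mk, Equiv.coe_fn_mk] <;>
      simp only [glue, Equiv.coe_fn_mk, Sum.elim_inl, Sum.elim_inr] <;>
      split_ifs <;> simp_all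
  · rfl


end RootedMultigraph

/-- Finite rooted directed acyclic multigraphs with source root. -/
abbrev RootedDAG := {G : RootedMultigraph // G.Good}

def dagIsoRel : RootedDAG → RootedDAG → Prop := fun G G' => G.1.Iso G'.1

/-- Isomorphism classes of finite rooted directed acyclic multigraphs with source root. -/
abbrev DAGClass := Quot dagIsoRel

/-- The (right) pre-Lie identity for a bilinear map. -/
def IsPreLie {R M : Type*} [CommRing R] [AddCommGroup M] [Module R M]
    (t : M →ₗ[R] M →ₗ[R] M) : Prop :=
  ∀ x y z : M, t (t x y) z - t x (t y z) = t (t x z) y - t x (t z y)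



namespace InsertionLie

open RootedMultigraph Finsupp

variable (R : Type) [CommRing R]

/-- glued DAG -/
def gl (G₁ G₂ : RootedDAG) (v : G₁.1.V) : RootedDAG :=
  ⟨G₁.1.glue v G₂.1, glue_good G₁.2 G₂.2 v⟩

def q : RootedDAG → DAGClass := Quot.mk dagIsoRel

def sG (G : RootedDAG) : DAGClass →₀ R := Finsupp.single (q G) 1

/-- insertion on representatives -/
def mG (G₁ G₂ : RootedDAG) : DAGClass →₀ R :=
  ∑ v : G₁.1.V, Finsupp.single (q (gl G₁ G₂ v)) 1

theorem mG_congr {G₁ G₁' G₂ G₂' : RootedDAG} (h₁ : dagIsoRel G₁ G₁')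
    (h₂ : dagIsoRel G₂ G₂') : mG R G₁ G₂ = mG R G₁' G₂' := by
  obtain ⟨eV, eE, hs₁, ht₁, hr₁⟩ := h₁
  obtain ⟨fV, fE, hs₂, ht₂, hr₂⟩ := h₂
  exact Fintype.sum_equiv eV _ _ fun v => by
    have h : q (gl G₁ G₂ v) = q (gl G₁' G₂' (eV v)) :=
      Quot.sound (glue_iso_congr eV eE hs₁ ht₁ hr₁ fV fE hs₂ ht₂ hr₂ v :
        dagIsoRel (gl G₁ G₂ v) (gl G₁' G₂' (eV v)))
    rw [h]

def isoRefl (G : RootedDAG) : dagIsoRel G G :=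
  ⟨Equiv.refl _, Equiv.refl _, fun _ => rfl, fun _ => rfl, rfl⟩

def mQ : DAGClass → DAGClass → (DAGClass →₀ R) :=
  Quot.lift (fun G₁ => Quot.lift (mG R G₁) (fun _ _ h => mG_congr R (isoRefl G₁) h))
    (fun _ _ h => funext fun b => Quot.inductionOn b fun G₂ => mG_congr R h (isoRefl G₂))

def ins : (DAGClass →₀ R) →ₗ[R] (DAGClass →₀ R) →ₗ[R] (DAGClass →₀ R) :=
  Finsupp.lsum R fun a => LinearMap.toSpanSingleton R _
    (Finsupp.lsum R fun b => LinearMap.toSpanSingleton R _ (mQ R a b))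

theorem ins_single (a b : DAGClass) :
    ins R (Finsupp.single a 1) (Finsupp.single b 1) = mQ R a b := by
  simp [ins, Finsupp.lsum_single, LinearMap.toSpanSingleton_apply]

theorem ins_single' (G₁ G₂ : RootedDAG) : ins R (sG R G₁) (sG R G₂) = mG R G₁ G₂ :=
  ins_single R (q G₁) (q G₂)

theorem ins_mG_left (G₁ G₂ G₃ : RootedDAG) :
    ins R (mG R G₁ G₂) (sG R G₃) = ∑ v : G₁.1.V, mG R (gl G₁ G₂ v) G₃ := by
  rw [mG, map_sum, LinearMap.sum_apply]
  exact Finset.sum_congr rfl fun v _ => ins_single' R (gl G₁ G₂ v) G₃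

theorem ins_mG_right (G₁ G₂ G₃ : RootedDAG) :
    ins R (sG R G₁) (mG R G₂ G₃) = ∑ w : G₂.1.V, mG R G₁ (gl G₂ G₃ w) := by
  rw [mG, map_sum]
  exact Finset.sum_congr rfl fun w _ => ins_single' R G₁ (gl G₂ G₃ w)

/-- the off-root double-insertion atoms -/
def A (G₁ G₂ G₃ : RootedDAG) (v u : G₁.1.V) : DAGClass →₀ R :=
  Finsupp.single (q (gl (gl G₁ G₂ v) G₃ (Sum.inl u))) 1

def B (G₁ G₂ G₃ : RootedDAG) (v : G₁.1.V) (w : {w : G₂.1.V // w ≠ G₂.1.root}) :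
    DAGClass →₀ R :=
  Finsupp.single (q (gl (gl G₁ G₂ v) G₃ (Sum.inr w))) 1

theorem mG_gl_split (G₁ G₂ G₃ : RootedDAG) (v : G₁.1.V) :
    mG R (gl G₁ G₂ v) G₃
      = (∑ u : G₁.1.V, A R G₁ G₂ G₃ v u)
        + ∑ w : {w : G₂.1.V // w ≠ G₂.1.root}, B R G₁ G₂ G₃ v w :=
  Fintype.sum_sum_type _

def J (G₁ G₂ : RootedDAG) (v : G₁.1.V) (w : G₂.1.V) : (gl G₁ G₂ v).1.V :=
  if h : w = G₂.1.root then Sum.inl v else Sum.inr ⟨w, h⟩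

theorem assoc_class (G₁ G₂ G₃ : RootedDAG) (v : G₁.1.V) (w : G₂.1.V) :
    (Finsupp.single (q (gl G₁ (gl G₂ G₃ w) v)) 1 : DAGClass →₀ R)
      = Finsupp.single (q (gl (gl G₁ G₂ v) G₃ (J G₁ G₂ v w))) 1 := by
  congr 1
  have h : dagIsoRel (gl (gl G₁ G₂ v) G₃ (J G₁ G₂ v w)) (gl G₁ (gl G₂ G₃ w) v) :=
    iso_glue_assoc G₁.1 G₂.1 G₃.1 v w
  exact (Quot.sound h).symm

theorem sum_J (G₁ G₂ : RootedDAG) (v : G₁.1.V) (f : (gl G₁ G₂ v).1.V → (DAGClass →₀ R)) :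
    ∑ w : G₂.1.V, f (J G₁ G₂ v w)
      = f (Sum.inl v) + ∑ w : {w : G₂.1.V // w ≠ G₂.1.root}, f (Sum.inr w) := by
  rw [← Finset.add_sum_erase _ _ (Finset.mem_univ G₂.1.root)]
  congr 1
  · erw [J, dif_pos rfl]
  · rw [Finset.sum_subtype (p := fun w => w ≠ G₂.1.root) (Finset.univ.erase G₂.1.root)
      (fun x => by simp) (fun w => f (J G₁ G₂ v w))]
    exact Finset.sum_congr rfl fun w _ => by erw [J, dif_neg w.2]

theorem diff_eq (G₁ G₂ G₃ : RootedDAG) :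
    ins R (ins R (sG R G₁) (sG R G₂)) (sG R G₃)
      - ins R (sG R G₁) (ins R (sG R G₂) (sG R G₃))
    = (∑ v : G₁.1.V, ∑ u : G₁.1.V, A R G₁ G₂ G₃ v u) - ∑ v : G₁.1.V, A R G₁ G₂ G₃ v v := by
  rw [ins_single' R G₁ G₂, ins_single' R G₂ G₃, ins_mG_left, ins_mG_right]
  have h1 : ∑ v : G₁.1.V, mG R (gl G₁ G₂ v) G₃
      = ∑ v : G₁.1.V, ((∑ u : G₁.1.V, A R G₁ G₂ G₃ v u)
          + ∑ w : {w : G₂.1.V // w ≠ G₂.1.root}, B R G₁ G₂ G₃ v w) :=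
    Finset.sum_congr rfl fun v _ => mG_gl_split R G₁ G₂ G₃ v
  have h2 : ∑ w : G₂.1.V, mG R G₁ (gl G₂ G₃ w)
      = ∑ v : G₁.1.V, (A R G₁ G₂ G₃ v v
          + ∑ w : {w : G₂.1.V // w ≠ G₂.1.root}, B R G₁ G₂ G₃ v w) := by
    have : ∀ w : G₂.1.V, mG R G₁ (gl G₂ G₃ w)
        = ∑ v : G₁.1.V, Finsupp.single (q (gl (gl G₁ G₂ v) G₃ (J G₁ G₂ v w))) 1 :=
      fun w => Finset.sum_congr rfl fun v _ => assoc_class R G₁ G₂ G₃ v w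
    rw [Finset.sum_congr rfl fun w _ => this w, Finset.sum_comm]
    exact Finset.sum_congr rfl fun v _ =>
      sum_J R G₁ G₂ v (fun x => Finsupp.single (q (gl (gl G₁ G₂ v) G₃ x)) 1)
  rw [h1, h2, Finset.sum_add_distrib, Finset.sum_add_distrib]
  abel

theorem A_swap (G₁ G₂ G₃ : RootedDAG) (v u : G₁.1.V) :
    A R G₁ G₂ G₃ v u = A R G₁ G₃ G₂ u v := by
  unfold A
  congr 1
  exact Quot.sound (iso_glue_swap G₁.1 G₂.1 G₃.1 v u :
    dagIsoRel (gl (gl G₁ G₂ v) G₃ (Sum.inl u)) (gl (gl G₁ G₃ u) G₂ (Sum.inl v)))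

theorem key (G₁ G₂ G₃ : RootedDAG) :
    ins R (ins R (sG R G₁) (sG R G₂)) (sG R G₃)
      - ins R (sG R G₁) (ins R (sG R G₂) (sG R G₃))
    = ins R (ins R (sG R G₁) (sG R G₃)) (sG R G₂)
      - ins R (sG R G₁) (ins R (sG R G₃) (sG R G₂)) := by
  rw [diff_eq, diff_eq]
  congr 1
  · rw [Finset.sum_comm]
    exact Finset.sum_congr rfl fun u _ => Finset.sum_congr rfl fun v _ => A_swap R G₁ G₂ G₃ v u
  · exact Finset.sum_congr rfl fun v _ => A_swap R G₁ G₂ G₃ v v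

theorem ins_prelie : IsPreLie (ins R) := by
  set t := ins R with ht
  have H1 : ∀ (a b c : DAGClass),
      t (t (Finsupp.single a 1) (Finsupp.single b 1)) (Finsupp.single c 1)
        - t (Finsupp.single a 1) (t (Finsupp.single b 1) (Finsupp.single c 1))
      = t (t (Finsupp.single a 1) (Finsupp.single c 1)) (Finsupp.single b 1)
        - t (Finsupp.single a 1) (t (Finsupp.single c 1) (Finsupp.single b 1)) := by
    intro a b c
    induction a using Quot.inductionOn with | _ G₁ => ?_
    induction b using Quot.inductionOn with | _ G₂ => ?_
    induction c using Quot.inductionOn with | _ G₃ => ?_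
    exact key R G₁ G₂ G₃
  have H2 : ∀ (a b : DAGClass) (z : DAGClass →₀ R),
      t (t (Finsupp.single a 1) (Finsupp.single b 1)) z
        - t (Finsupp.single a 1) (t (Finsupp.single b 1) z)
      = t (t (Finsupp.single a 1) z) (Finsupp.single b 1)
        - t (Finsupp.single a 1) (t z (Finsupp.single b 1)) := by
    intro a b z
    induction z using Finsupp.induction_linear with
    | zero => simp
    | add f g hf hg =>
      simp only [map_add, LinearMap.add_apply]
      rw [add_sub_add_comm, add_sub_add_comm, hf, hg]
    | single c r =>
      rw [show (Finsupp.single c r : DAGClass →₀ R) = r • Finsupp.single c 1 from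
        (Finsupp.smul_single_one c r).symm]
      simp only [map_smul, LinearMap.smul_apply]
      rw [← smul_sub, ← smul_sub, H1 a b c]
  have H3 : ∀ (a : DAGClass) (y z : DAGClass →₀ R),
      t (t (Finsupp.single a 1) y) z - t (Finsupp.single a 1) (t y z)
      = t (t (Finsupp.single a 1) z) y - t (Finsupp.single a 1) (t z y) := by
    intro a y z
    induction y using Finsupp.induction_linear with
    | zero => simp
    | add f g hf hg =>
      simp only [map_add, LinearMap.add_apply]
      rw [add_sub_add_comm, add_sub_add_comm, hf, hg]
    | single b r =>
      rw [show (Finsupp.single b r : DAGClass →₀ R) = r • Finsupp.single b 1 from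
        (Finsupp.smul_single_one b r).symm]
      simp only [map_smul, LinearMap.smul_apply]
      rw [← smul_sub, ← smul_sub, H2 a b z]
  intro x y z
  induction x using Finsupp.induction_linear with
  | zero => simp
  | add f g hf hg =>
    simp only [map_add, LinearMap.add_apply]
    rw [add_sub_add_comm, add_sub_add_comm, hf, hg]
  | single a r =>
    rw [show (Finsupp.single a r : DAGClass →₀ R) = r • Finsupp.single a 1 from
      (Finsupp.smul_single_one a r).symm]
    simp only [map_smul, LinearMap.smul_apply]
    rw [← smul_sub, ← smul_sub, H3 a y z]

end InsertionLie
/-- the bracket `[x, y] := x ⊲ y − y ⊲ x` associated to the insertion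
operator `G₁ ⊲ G₂ = Σ_{v ∈ V(G₁)} [G₁ ⊲_v G₂]` makes the free `R`-module on
isomorphism classes of finite rooted directed acyclic multigraphs with source root
into a Lie algebra: it is bilinear, alternating, and satisfies the Jacobi identity. -/
theorem insertion_bracket_of_rooted_dags_is_lie (R : Type) [CommRing R] :
    ∃ ins : (DAGClass →₀ R) →ₗ[R] (DAGClass →₀ R) →ₗ[R] (DAGClass →₀ R),
      (∀ G₁ G₂ : RootedDAG,
        ∃ h : ∀ v : G₁.1.V, (G₁.1.glue v G₂.1).Good,
          ins (Finsupp.single (Quot.mk dagIsoRel G₁) 1)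
              (Finsupp.single (Quot.mk dagIsoRel G₂) 1)
            = ∑ v : G₁.1.V,
                Finsupp.single
                  (Quot.mk dagIsoRel (⟨G₁.1.glue v G₂.1, h v⟩ : RootedDAG)) (1 : R)) ∧
      (∀ (r : R) (x x' y : DAGClass →₀ R),
        (ins (r • x + x') y - ins y (r • x + x'))
          = r • (ins x y - ins y x) + (ins x' y - ins y x')) ∧
      (∀ (r : R) (x y y' : DAGClass →₀ R),
        (ins x (r • y + y') - ins (r • y + y') x)
          = r • (ins x y - ins y x) + (ins x y' - ins y' x)) ∧
      (∀ x : DAGClass →₀ R, ins x x - ins x x = 0) ∧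
      (∀ x y z : DAGClass →₀ R,
        (ins x (ins y z - ins z y) - ins (ins y z - ins z y) x)
          + (ins z (ins x y - ins y x) - ins (ins x y - ins y x) z)
          + (ins y (ins z x - ins x z) - ins (ins z x - ins x z) y) = 0) := by
  refine ⟨InsertionLie.ins R, ?_, ?_, ?_, ?_, ?_⟩
  · intro G₁ G₂
    refine ⟨fun v => RootedMultigraph.glue_good G₁.2 G₂.2 v, ?_⟩
    exact InsertionLie.ins_single' R G₁ G₂
  · intro r x x' y
    simp only [map_add, map_smul, LinearMap.add_apply, LinearMap.smul_apply,
      smul_sub, add_sub_add_comm]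
    try abel
  · intro r x y y'
    simp only [map_add, map_smul, LinearMap.add_apply, LinearMap.smul_apply,
      smul_sub, add_sub_add_comm]
    try abel
  · intro x
    exact sub_self _
  · intro x y z
    set t := InsertionLie.ins R with ht
    have h1 := InsertionLie.ins_prelie R x y z
    have h2 := InsertionLie.ins_prelie R y z x
    have h3 := InsertionLie.ins_prelie R z x y
    have e1 := sub_eq_zero_of_eq h1
    have e2 := sub_eq_zero_of_eq h2
    have e3 := sub_eq_zero_of_eq h3
    simp only [map_sub, LinearMap.sub_apply]
    have goal_eq :
        (t x (t y z) - t x (t z y) - (t (t y z) x - t (t z y) x))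
          + (t z (t x y) - t z (t y x) - (t (t x y) z - t (t y x) z))
          + (t y (t z x) - t y (t x z) - (t (t z x) y - t (t x z) y))
        = -((t (t x y) z - t x (t y z) - (t (t x z) y - t x (t z y)))
            + (t (t y z) x - t y (t z x) - (t (t y x) z - t y (t x z)))
            + (t (t z x) y - t z (t x y) - (t (t z y) x - t z (t y x)))) := by
      abel
    rw [goal_eq, e1, e2, e3]
    simp
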